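/- arXiv:1112.4649 — 12 statements merged into one kernel-verified Lean document; each statement's English description precedes it below -/
import Mathlib

section
/- Let G satisfy the general conditions on the nonlinearity. If G(y)/y is unbounded on (0,∞), then there exists β₀ > 0 such that for every β with 0 < β ≤ β₀ the map y ↦ G(βy) has a nonzero fixed point, i.e. there exists y > 0 with G(βy) = y. -/
/-- Lemma 1, direction "unbounded ⇒ (i)": if `G` satisfies the general conditions on the
nonlinearity and `G y / y` is unbounded on `(0, ∞)`, then there exists `β₀ > 0` such that for
every `0 < β ≤ β₀` the map `y ↦ G (β * y)` has a nonzero fixed point. -/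
theorem lemma1_unbounded_implies_i (G : ℝ → ℝ)
    (hG_cont : ContinuousOn G (Set.Ici 0))
    (hG_mono : StrictMonoOn G (Set.Ici 0))
    (hG_nonneg : ∀ y ≥ (0:ℝ), 0 ≤ G y)
    (hG0 : G 0 = 0)
    (hG_unb : ∀ M > (0:ℝ), ∃ y > (0:ℝ), G y > M * y) :
    ∃ β₀ > (0:ℝ), ∀ β : ℝ, 0 < β → β ≤ β₀ → ∃ y > (0:ℝ), G (β * y) = y := by
  have hG1 : (0:ℝ) ≤ G 1 := hG_nonneg 1 (by norm_num)
  refine ⟨1 / (G 1 + 1), by positivity, ?_⟩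
  intro β hβ hββ
  have hβinv : G 1 + 1 ≤ 1 / β := by
    rw [le_div_iff₀ hβ]
    calc (G 1 + 1) * β ≤ (G 1 + 1) * (1 / (G 1 + 1)) := by
          apply mul_le_mul_of_nonneg_left hββ (by positivity)
      _ = 1 := by field_simp
  obtain ⟨z₁, hz₁, hGz₁⟩ := hG_unb (1 / β) (by positivity)
  set h : ℝ → ℝ := fun z => G z - z * (1 / β) with hh
  have hsub : Set.uIcc z₁ 1 ⊆ Set.Ici (0:ℝ) := by
    intro x hx
    have := hx.1
    have hmin : (0:ℝ) ≤ min z₁ 1 := le_min hz₁.le (by norm_num)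
    exact le_trans hmin this
  have hcont : ContinuousOn h (Set.uIcc z₁ 1) :=
    ((hG_cont.mono hsub).sub ((continuous_id.mul continuous_const).continuousOn))
  have h1neg : h 1 < 0 := by
    have : G 1 < 1 / β := lt_of_lt_of_le (by linarith) hβinv
    show G 1 - 1 * (1 / β) < 0
    linarith
  have hz₁pos : 0 < h z₁ := by
    show 0 < G z₁ - z₁ * (1 / β)
    have hc : z₁ * (1 / β) = (1 / β) * z₁ := mul_comm _ _
    linarith
  have hmem : (0:ℝ) ∈ Set.uIcc (h z₁) (h 1) :=
    Set.mem_uIcc.2 (Or.inr ⟨h1neg.le, hz₁pos.le⟩)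
  obtain ⟨z, hzmem, hzval⟩ := intermediate_value_uIcc hcont hmem
  have hzpos : 0 < z := lt_of_lt_of_le (lt_min hz₁ one_pos) hzmem.1
  have hGz : G z = z * (1 / β) := by
    have : G z - z * (1 / β) = 0 := hzval
    linarith
  refine ⟨z / β, by positivity, ?_⟩
  have : β * (z / β) = z := by field_simp
  rw [this, hGz]; field_simp
end

section
/- Let G satisfy the general conditions on the nonlinearity. If G(y)/y is unbounded on (0,∞), then for every A ≥ 0 there exists β_A > 0 such that for all α with 0 ≤ α ≤ A and all β with 0 < β ≤ β_A there exists y > 0 with G(α + βy) = y. -/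
/-- Lemma 1, direction "unbounded ⇒ (ii)": if `G` satisfies the general conditions on the
nonlinearity and `G y / y` is unbounded on `(0, ∞)`, then for every `A ≥ 0` there is `β_A > 0`
such that for all `0 ≤ α ≤ A` and `0 < β ≤ β_A`, the map `y ↦ G (α + β * y)` has a nonzero
fixed point. -/
theorem lemma1_unbounded_implies_ii (G : ℝ → ℝ)
    (hG_cont : ContinuousOn G (Set.Ici 0))
    (hG_mono : StrictMonoOn G (Set.Ici 0))
    (hG_nonneg : ∀ y ≥ (0:ℝ), 0 ≤ G y)
    (hG0 : G 0 = 0)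
    (hG_unb : ∀ M > (0:ℝ), ∃ y > (0:ℝ), G y > M * y) :
    ∀ A ≥ (0:ℝ), ∃ βA > (0:ℝ), ∀ α β : ℝ, 0 ≤ α → α ≤ A → 0 < β → β ≤ βA →
      ∃ y > (0:ℝ), G (α + β * y) = y := by
  intro A hA
  have hGA1 : 0 ≤ G (A + 1) := hG_nonneg _ (by linarith)
  set y₁ : ℝ := G (A + 1) + 1 with hy₁def
  have hy₁pos : 0 < y₁ := by positivity
  refine ⟨1 / y₁, by positivity, ?_⟩
  intro α β hα hαA hβ hββ
  -- f is negative at y₁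
  have hmem1 : α + β * y₁ ∈ Set.Ici (0:ℝ) := by
    have : 0 ≤ β * y₁ := by positivity
    simp only [Set.mem_Ici]; linarith
  have hβy₁ : β * y₁ ≤ 1 := by
    have := mul_le_mul_of_nonneg_right hββ (le_of_lt hy₁pos)
    rwa [one_div, inv_mul_cancel₀ (ne_of_gt hy₁pos)] at this
  have hneg : G (α + β * y₁) < y₁ := by
    have hle : G (α + β * y₁) ≤ G (A + 1) :=
      hG_mono.monotoneOn hmem1 (by simp only [Set.mem_Ici]; linarith) (by linarith)
    linarith
  -- f is positive at y₂ := z / β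
  obtain ⟨z, hz, hGz⟩ := hG_unb (1 / β) (by positivity)
  set y₂ : ℝ := z / β with hy₂def
  have hy₂pos : 0 < y₂ := by positivity
  have hβy₂ : β * y₂ = z := by rw [hy₂def]; field_simp
  have hpos : y₂ < G (α + β * y₂) := by
    have h1 : G z ≤ G (α + β * y₂) :=
      hG_mono.monotoneOn (Set.mem_Ici.mpr (le_of_lt hz))
        (by simp only [Set.mem_Ici]; rw [hβy₂]; linarith) (by rw [hβy₂]; linarith)
    have h2 : (1 / β) * z = y₂ := by field_simp [hy₂def]; exact hβy₂.symm
    linarith [hGz, h1, h2 ▸ hGz]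
  -- the function f y = G (α + β y) - y is continuous on [0, ∞)
  have hfc : ContinuousOn (fun y => G (α + β * y) - y) (Set.Ici (0:ℝ)) := by
    apply ContinuousOn.sub _ continuousOn_id
    apply hG_cont.comp ((continuous_const.add (continuous_const.mul continuous_id)).continuousOn)
    intro y hy
    simp only [Set.mem_Ici, id_eq] at hy ⊢
    have : 0 ≤ β * y := by positivity
    show 0 ≤ α + β * y; linarith
  set f : ℝ → ℝ := fun y => G (α + β * y) - y with hf
  have hfneg : f y₁ < 0 := by simp only [hf]; linarith
  have hfpos : 0 < f y₂ := by simp only [hf]; linarith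
  rcases lt_trichotomy y₁ y₂ with h | h | h
  · have hsub : Set.Icc y₁ y₂ ⊆ Set.Ici (0:ℝ) := by
      intro x hx; exact le_trans (le_of_lt hy₁pos) hx.1
    have := intermediate_value_Ioo (le_of_lt h) (hfc.mono hsub)
    have h0 : (0:ℝ) ∈ Set.Ioo (f y₁) (f y₂) := ⟨hfneg, hfpos⟩
    obtain ⟨y, hyIoo, hfy⟩ := this h0
    refine ⟨y, lt_trans hy₁pos hyIoo.1, ?_⟩
    simp only [hf] at hfy; linarith
  · exfalso; rw [h] at hfneg; linarith
  · have hsub : Set.Icc y₂ y₁ ⊆ Set.Ici (0:ℝ) := by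
      intro x hx; exact le_trans (le_of_lt hy₂pos) hx.1
    have := intermediate_value_Ioo' (le_of_lt h) (hfc.mono hsub)
    have h0 : (0:ℝ) ∈ Set.Ioo (f y₁) (f y₂) := ⟨hfneg, hfpos⟩
    obtain ⟨y, hyIoo, hfy⟩ := this h0
    refine ⟨y, lt_trans hy₂pos hyIoo.1, ?_⟩
    simp only [hf] at hfy; linarith
end

section
/- Let G satisfy the general conditions on the nonlinearity. If G(y)/y is unbounded near zero but bounded away from zero, then there exists β₀ > 0 such that for every α ≥ 0 and every β with 0 < β ≤ β₀ there exists y > 0 with G(α + βy) = y. -/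
/-- Lemma 2, existence part: if `G` satisfies the general conditions on the nonlinearity and
`G y / y` is unbounded near zero but bounded away from zero, then there exists `β₀ > 0` such
that for every `α ≥ 0` and every `0 < β ≤ β₀`, the map `y ↦ G (α + β * y)` has a nonzero fixed
point. -/
theorem lemma2_existence (G : ℝ → ℝ)
    (hG_cont : ContinuousOn G (Set.Ici 0))
    (hG_mono : StrictMonoOn G (Set.Ici 0))
    (hG_nonneg : ∀ y ≥ (0:ℝ), 0 ≤ G y)
    (hG0 : G 0 = 0)
    (hG_unb0 : ∀ δ > (0:ℝ), ∀ M > (0:ℝ), ∃ y : ℝ, 0 < y ∧ y < δ ∧ G y > M * y)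
    (hG_bdd : ∀ t > (0:ℝ), ∃ M > (0:ℝ), ∀ y > t, G y ≤ M * y) :
    ∃ β₀ > (0:ℝ), ∀ α ≥ (0:ℝ), ∀ β : ℝ, 0 < β → β ≤ β₀ →
      ∃ y > (0:ℝ), G (α + β * y) = y := by
  obtain ⟨M, hM, hMle⟩ := hG_bdd 1 one_pos
  refine ⟨1 / (2 * M), by positivity, ?_⟩
  intro α hα β hβ hββ₀
  -- lower point: from unboundedness near 0
  obtain ⟨z, hz0, hz1, hzG⟩ := hG_unb0 1 one_pos (1 / β) (by positivity)
  set a : ℝ := z / β with ha_def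
  have ha_pos : 0 < a := by positivity
  set b : ℝ := max a (max (2 * M * α + 1) (1 / β + 1)) with hb_def
  have hab : a ≤ b := le_max_left _ _
  have hb1 : 2 * M * α + 1 ≤ b := le_trans (le_max_left _ _) (le_max_right _ _)
  have hb2 : 1 / β + 1 ≤ b := le_trans (le_max_right _ _) (le_max_right _ _)
  have hb_pos : 0 < b := lt_of_lt_of_le ha_pos hab
  set f : ℝ → ℝ := fun y => G (α + β * y) - y with hf_def
  have hβa : β * a = z := by rw [ha_def]; field_simp
  have hfa : 0 < f a := by
    have h1 : G z ≤ G (α + β * a) := by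
      rw [hβa]
      exact hG_mono.monotoneOn (Set.mem_Ici.mpr hz0.le)
        (Set.mem_Ici.mpr (by linarith)) (by linarith)
    have h2 : (1 / β) * z = a := by rw [ha_def]; field_simp
    simp only [hf_def]
    nlinarith [hzG]
  have hMβ : M * β ≤ 1 / 2 := by
    have h := mul_le_mul_of_nonneg_left hββ₀ hM.le
    have h2 : M * (1 / (2 * M)) = 1 / 2 := by field_simp
    linarith
  have hfb : f b < 0 := by
    have hβb : 1 < α + β * b := by
      have : β * (1 / β + 1) ≤ β * b := by nlinarith
      have h1 : β * (1 / β + 1) = 1 + β := by field_simp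
      nlinarith
    have h2 : G (α + β * b) ≤ M * (α + β * b) := hMle _ hβb
    simp only [hf_def]
    nlinarith
  have hcont : ContinuousOn f (Set.Icc a b) := by
    apply ContinuousOn.sub _ continuousOn_id
    apply hG_cont.comp (Continuous.continuousOn (by continuity))
    intro y hy
    have hy0 : 0 < y := lt_of_lt_of_le ha_pos hy.1
    simp only [Set.mem_Ici]
    positivity
  have h0mem : (0:ℝ) ∈ Set.Icc (f b) (f a) := ⟨hfb.le, hfa.le⟩
  obtain ⟨c, hc, hfc⟩ := intermediate_value_Icc' hab hcont h0mem
  refine ⟨c, lt_of_lt_of_le ha_pos hc.1, ?_⟩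
  have : G (α + β * c) - c = 0 := hfc
  linarith
end

section
/- Let G satisfy the general conditions on the nonlinearity. If G(y)/y is unbounded near zero and there exists a sequence (yₙ) of positive reals with yₙ → +∞ and G(yₙ)/yₙ → 0, then for every α ≥ 0 and every β > 0 there exists y > 0 with G(α + βy) = y. -/
/-- Lemma 3, existence part: if `G` satisfies the general conditions on the nonlinearity,
`G y / y` is unbounded near zero, and there is a sequence of positive reals `yₙ → +∞` with
`G yₙ / yₙ → 0`, then for every `α ≥ 0` and every `β > 0`, the map `y ↦ G (α + β * y)` has a
nonzero fixed point. -/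
theorem lemma3_existence (G : ℝ → ℝ)
    (hG_cont : ContinuousOn G (Set.Ici 0))
    (hG_mono : StrictMonoOn G (Set.Ici 0))
    (hG_nonneg : ∀ y ≥ (0:ℝ), 0 ≤ G y)
    (hG0 : G 0 = 0)
    (hG_unb0 : ∀ δ > (0:ℝ), ∀ M > (0:ℝ), ∃ y : ℝ, 0 < y ∧ y < δ ∧ G y > M * y)
    (yseq : ℕ → ℝ)
    (hseq_pos : ∀ n, 0 < yseq n)
    (hseq_div : Filter.Tendsto yseq Filter.atTop Filter.atTop)
    (hseq_ratio : Filter.Tendsto (fun n => G (yseq n) / yseq n) Filter.atTop (nhds 0)) :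
    ∀ α ≥ (0:ℝ), ∀ β > (0:ℝ), ∃ y > (0:ℝ), G (α + β * y) = y := by
  intro α hα β hβ
  -- a lower endpoint where G(α+βa) > a
  obtain ⟨a, ha0, haF⟩ : ∃ a : ℝ, 0 ≤ a ∧ a < G (α + β * a) := by
    rcases eq_or_lt_of_le hα with h | h
    · obtain ⟨z, hz0, hzδ, hzM⟩ := hG_unb0 1 one_pos (1/β) (by positivity)
      refine ⟨z / β, by positivity, ?_⟩
      have hz : α + β * (z / β) = z := by rw [← h]; field_simp; ring
      rw [hz]
      calc z / β = (1/β) * z := by ring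
        _ < G z := hzM
    · refine ⟨0, le_refl _, ?_⟩
      simp only [mul_zero, add_zero]
      have := hG_mono (Set.mem_Ici.mpr le_rfl) (Set.mem_Ici.mpr h.le) h
      rwa [hG0] at this
  -- an upper endpoint where G(α+βb) < b
  have h1 : ∀ᶠ n in Filter.atTop, G (yseq n) / yseq n < 1 / (2 * β) :=
    hseq_ratio.eventually_lt_const (by positivity)
  have h2 : ∀ᶠ n in Filter.atTop, max (2 * α) (β * a + α) < yseq n :=
    hseq_div.eventually_gt_atTop _
  obtain ⟨n, hn1, hn2⟩ := (h1.and h2).exists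
  have hyn : 0 < yseq n := hseq_pos n
  set b : ℝ := (yseq n - α) / β with hb
  have hab : a < b := by
    rw [hb, lt_div_iff₀ hβ]
    have := (le_max_right (2 * α) (β * a + α)).trans_lt hn2
    linarith
  have hbval : α + β * b = yseq n := by rw [hb]; field_simp; ring
  have hGyn : G (yseq n) < yseq n / (2 * β) := by
    rw [lt_div_iff₀ (by positivity : (0:ℝ) < 2 * β)]
    have := (div_lt_div_iff₀ hyn (by positivity : (0:ℝ) < 2 * β)).mp hn1
    linarith
  have hbF : G (α + β * b) < b := by
    rw [hbval, hb, lt_div_iff₀ hβ]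
    have h2α : 2 * α < yseq n := (le_max_left _ _).trans_lt hn2
    have hmul := mul_lt_mul_of_pos_right hGyn hβ
    have : yseq n / (2 * β) * β = yseq n / 2 := by field_simp
    rw [this] at hmul
    linarith
  -- intermediate value theorem for F y = G(α+βy) - y
  set F : ℝ → ℝ := fun y => G (α + β * y) - y with hF
  have hcont : ContinuousOn F (Set.Icc a b) := by
    apply ContinuousOn.sub ?_ continuousOn_id
    apply hG_cont.comp ((by fun_prop : Continuous fun y : ℝ => α + β * y).continuousOn)
    intro y hy
    have h1 : 0 ≤ y := ha0.trans hy.1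
    have h2 : 0 ≤ β * y := by positivity
    simp only [Set.mem_Ici]
    linarith
  have hmem : (0:ℝ) ∈ Set.Icc (F b) (F a) := by
    constructor
    · simp only [hF]; linarith
    · simp only [hF]; linarith
  obtain ⟨y, hy, hFy⟩ := intermediate_value_Icc' hab.le hcont hmem
  refine ⟨y, ?_, by simpa [hF, sub_eq_zero] using hFy⟩
  rcases ha0.lt_or_eq with h | h
  · exact h.trans_le hy.1
  · have hya : y ≠ a := by
      intro he
      rw [he] at hFy
      simp only [hF] at hFy
      linarith
    rw [← h] at hy hya
    exact lt_of_le_of_ne hy.1 (Ne.symm hya)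
end

section
/- Let G satisfy the general conditions on the nonlinearity, and suppose G(y)/y is unbounded near zero, strictly decreasing on (0,∞), and there exists a sequence (yₙ) of positive reals with yₙ → +∞ and G(yₙ)/yₙ → 0. Then for every α ≥ 0 and every β > 0 there exists exactly one y > 0 with G(α + βy) = y. -/
/-- Lemma 3, uniqueness part: if `G` satisfies the general conditions on the nonlinearity,
`G y / y` is unbounded near zero, strictly decreasing on `(0, ∞)`, and there is a sequence of
positive reals `yₙ → +∞` with `G yₙ / yₙ → 0`, then for every `α ≥ 0` and every `β > 0`, the
map `y ↦ G (α + β * y)` has exactly one nonzero fixed point. -/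
theorem lemma3_uniqueness (G : ℝ → ℝ)
    (hG_cont : ContinuousOn G (Set.Ici 0))
    (hG_mono : StrictMonoOn G (Set.Ici 0))
    (hG_nonneg : ∀ y ≥ (0:ℝ), 0 ≤ G y)
    (hG0 : G 0 = 0)
    (hG_unb0 : ∀ δ > (0:ℝ), ∀ M > (0:ℝ), ∃ y : ℝ, 0 < y ∧ y < δ ∧ G y > M * y)
    (hG_dec : ∀ y₁ y₂ : ℝ, 0 < y₁ → y₁ < y₂ → G y₂ / y₂ < G y₁ / y₁)
    (yseq : ℕ → ℝ)
    (hseq_pos : ∀ n, 0 < yseq n)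
    (hseq_div : Filter.Tendsto yseq Filter.atTop Filter.atTop)
    (hseq_ratio : Filter.Tendsto (fun n => G (yseq n) / yseq n) Filter.atTop (nhds 0)) :
    ∀ α ≥ (0:ℝ), ∀ β > (0:ℝ), ∃! y : ℝ, 0 < y ∧ G (α + β * y) = y := by
  intro α hα β hβ
  -- continuity of the shifted map
  have hcont : ContinuousOn (fun y => G (α + β * y) - y) (Set.Ici 0) := by
    apply ContinuousOn.sub
    · exact hG_cont.comp (by fun_prop) (fun y hy => by
        simp only [Set.mem_Ici] at *
        have := mul_nonneg hβ.le hy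
        linarith)
    · exact continuousOn_id
  -- small point a where the map is above the diagonal
  obtain ⟨z, hz0, hz1, hzG⟩ := hG_unb0 1 one_pos (1/β) (by positivity)
  set a := z / β with ha
  have ha0 : 0 < a := div_pos hz0 hβ
  have haz : β * a = z := by rw [ha]; field_simp
  have hfa : a < G (α + β * a) := by
    have h1 : G z ≤ G (α + z) :=
      hG_mono.monotoneOn (Set.mem_Ici.2 hz0.le) (Set.mem_Ici.2 (by linarith)) (by linarith)
    have h2 : a = (1/β) * z := by rw [ha]; ring
    rw [haz, h2]
    linarith
  -- large point b where the map is below the diagonal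
  have hev1 := hseq_div.eventually_ge_atTop (max (α + β * a + 1) (2 * α))
  have hev2 : ∀ᶠ n in Filter.atTop, G (yseq n) / yseq n < 1 / (2 * β) :=
    hseq_ratio.eventually_lt_const (by positivity)
  obtain ⟨n, hn1, hn2⟩ := (hev1.and hev2).exists
  set w := yseq n with hw
  have hw0 : 0 < w := hseq_pos n
  have hwa : α + β * a + 1 ≤ w := le_trans (le_max_left _ _) hn1
  have hwα : 2 * α ≤ w := le_trans (le_max_right _ _) hn1
  set b := (w - α) / β with hb
  have hab : a < b := by
    rw [hb, lt_div_iff₀ hβ]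
    nlinarith
  have hb0 : 0 < b := ha0.trans hab
  have hbw : α + β * b = w := by rw [hb]; field_simp; ring
  have hGw : G w < w / (2 * β) := by
    have := (div_lt_div_iff₀ hw0 (by positivity)).1 hn2
    calc G w = (G w / w) * w := by field_simp
    _ < (1 / (2 * β)) * w := by
        apply mul_lt_mul_of_pos_right hn2 hw0
    _ = w / (2 * β) := by ring
  have hfb : G (α + β * b) < b := by
    rw [hbw, hb]
    have : w / (2 * β) ≤ (w - α) / β := by
      rw [div_le_div_iff₀ (by positivity) hβ]
      nlinarith
    linarith
  -- intermediate value theorem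
  have hsub : Set.Icc a b ⊆ Set.Ici 0 := fun x hx => le_trans ha0.le hx.1
  have hiv := intermediate_value_Icc' hab.le (hcont.mono hsub)
  have h0mem : (0:ℝ) ∈ Set.Icc (G (α + β * b) - b) (G (α + β * a) - a) :=
    ⟨by linarith, by linarith⟩
  obtain ⟨c, hcmem, hc0⟩ := hiv h0mem
  have hcpos : 0 < c := lt_of_lt_of_le ha0 hcmem.1
  have hc0' : G (α + β * c) - c = 0 := hc0
  have hcfix : G (α + β * c) = c := by linarith
  -- uniqueness key lemma
  have key : ∀ u v : ℝ, 0 < u → G (α + β * u) = u → G (α + β * v) = v → u < v → False := by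
    intro u v hu hfu hfv huv
    have hz1 : 0 < α + β * u := by nlinarith
    have hz2 : α + β * u < α + β * v := by nlinarith
    have hd := hG_dec _ _ hz1 hz2
    rw [hfu, hfv] at hd
    have h1 : v * (α + β * u) < u * (α + β * v) :=
      (div_lt_div_iff₀ (by linarith) hz1).1 hd
    nlinarith
  refine ⟨c, ⟨hcpos, hcfix⟩, ?_⟩
  rintro y ⟨hy0, hyfix⟩
  rcases lt_trichotomy y c with h | h | h
  · exact absurd (key y c hy0 hyfix hcfix h) (not_false)
  · exact h
  · exact absurd (key c y hcpos hcfix hyfix h) (not_false)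
end

section
/- Let G satisfy the general conditions on the nonlinearity and let α > 0. Then there exists β₀ > 0 such that for every β ∈ (0, β₀] the set S_β = {y > 0 : G(α + βy) = y} is nonempty and has a minimum m(β); moreover m(β) → G(α) as β → 0⁺ (that is, for every ε > 0 there exists β₁ ∈ (0, β₀] such that |m(β) − G(α)| < ε for all β ∈ (0, β₁]). -/
private lemma aux_least_fixed_point (G : ℝ → ℝ)
    (hG_cont : ContinuousOn G (Set.Ici 0))
    (hG_mono : StrictMonoOn G (Set.Ici 0))
    (hG0 : G 0 = 0)
    (α : ℝ) (hα : 0 < α) (β : ℝ) (hβ : 0 < β)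
    (hβM : β * G (α + 1) ≤ 1) :
    ∃ m : ℝ, IsLeast {y : ℝ | 0 < y ∧ G (α + β * y) = y} m ∧
      G α ≤ m ∧ m ≤ G (α + 1) := by
  set c := G α with hc_def
  set M := G (α + 1) with hM_def
  have hmono := hG_mono.monotoneOn
  have hc : 0 < c := by
    rw [hc_def, ← hG0]
    exact hG_mono (Set.mem_Ici.mpr le_rfl) (Set.mem_Ici.mpr hα.le) hα
  have hcM : c < M :=
    hG_mono (Set.mem_Ici.mpr hα.le) (Set.mem_Ici.mpr (by linarith)) (by linarith)
  have hM : 0 < M := hc.trans hcM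
  have h0M : (0:ℝ) ≤ M := hM.le
  set f : ℝ → ℝ := fun y => G (α + β * y) - y with hf_def
  have hmaps : ∀ y ∈ Set.Icc (0:ℝ) M, α + β * y ∈ Set.Ici (0:ℝ) := by
    intro y hy
    have : 0 ≤ β * y := mul_nonneg hβ.le hy.1
    simp only [Set.mem_Ici]; linarith
  have hf_cont : ContinuousOn f (Set.Icc 0 M) := by
    apply ContinuousOn.sub _ continuousOn_id
    exact hG_cont.comp ((continuous_const.add (continuous_const.mul continuous_id)).continuousOn)
      hmaps
  have hf0 : f 0 = c := by simp [hf_def, hc_def]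
  have hfM : f M ≤ 0 := by
    have h1 : α + β * M ≤ α + 1 := by linarith
    have h2 : G (α + β * M) ≤ M := by
      rw [hM_def]
      exact hmono (hmaps M ⟨h0M, le_rfl⟩) (Set.mem_Ici.mpr (by linarith)) h1
    simp only [hf_def]; linarith
  have hIVT : (0:ℝ) ∈ f '' Set.Icc 0 M := by
    apply intermediate_value_Icc' h0M hf_cont
    exact ⟨hfM, by rw [hf0]; exact hc.le⟩
  obtain ⟨y₀, hy₀, hfy₀⟩ := hIVT
  set T : Set ℝ := Set.Icc 0 M ∩ f ⁻¹' {0} with hT_def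
  have hT_closed : IsClosed T :=
    hf_cont.preimage_isClosed_of_isClosed isClosed_Icc isClosed_singleton
  have hT_compact : IsCompact T :=
    isCompact_Icc.of_isClosed_subset hT_closed Set.inter_subset_left
  have hT_ne : T.Nonempty := ⟨y₀, hy₀, by simp [hfy₀]⟩
  obtain ⟨m, hmT, hm_lb⟩ := hT_compact.exists_isLeast hT_ne
  have hm_eq : G (α + β * m) = m := by
    have := hmT.2
    simp only [Set.mem_preimage, Set.mem_singleton_iff, hf_def] at this
    linarith
  have hmM : m ≤ M := hmT.1.2
  have hm0 : 0 ≤ m := hmT.1.1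
  have hcm : c ≤ m := by
    rw [← hm_eq, hc_def]
    exact hmono (Set.mem_Ici.mpr hα.le) (hmaps m ⟨hm0, hmM⟩) (by nlinarith)
  refine ⟨m, ⟨⟨hc.trans_le hcm, hm_eq⟩, ?_⟩, hcm, hmM⟩
  intro y hy
  obtain ⟨hy_pos, hy_eq⟩ := hy
  by_cases hyM : y ≤ M
  · exact hm_lb ⟨⟨hy_pos.le, hyM⟩, by simp [hf_def, hy_eq]⟩
  · linarith

/-- Lemma 29, first part: for `G` satisfying the general conditions on the nonlinearity and
`α > 0`, the minimum of the nonzero fixed points of `y ↦ G (α + β * y)` exists for small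
enough `β > 0` and converges to `G α` as `β → 0⁺`. -/
theorem lemma_min_fixed_points_converges (G : ℝ → ℝ)
    (hG_cont : ContinuousOn G (Set.Ici 0))
    (hG_mono : StrictMonoOn G (Set.Ici 0))
    (hG_nonneg : ∀ y ≥ (0:ℝ), 0 ≤ G y)
    (hG0 : G 0 = 0)
    (α : ℝ) (hα : 0 < α) :
    ∃ β₀ > (0:ℝ),
      (∀ β : ℝ, 0 < β → β ≤ β₀ →
        ∃ m : ℝ, IsLeast {y : ℝ | 0 < y ∧ G (α + β * y) = y} m) ∧
      (∀ ε > (0:ℝ), ∃ β₁ : ℝ, 0 < β₁ ∧ β₁ ≤ β₀ ∧ ∀ β : ℝ, 0 < β → β ≤ β₁ →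
        ∀ m : ℝ, IsLeast {y : ℝ | 0 < y ∧ G (α + β * y) = y} m → |m - G α| < ε) := by
  set c := G α with hc_def
  set M := G (α + 1) with hM_def
  have hc : 0 < c := by
    rw [hc_def, ← hG0]
    exact hG_mono (Set.mem_Ici.mpr le_rfl) (Set.mem_Ici.mpr hα.le) hα
  have hcM : c < M :=
    hG_mono (Set.mem_Ici.mpr hα.le) (Set.mem_Ici.mpr (by linarith)) (by linarith)
  have hM : 0 < M := hc.trans hcM
  refine ⟨1 / M, by positivity, ?_, ?_⟩
  · intro β hβ hβ₀
    have hβM : β * M ≤ 1 := by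
      calc β * M ≤ (1 / M) * M := by nlinarith
        _ = 1 := by field_simp
    obtain ⟨m, hm, _, _⟩ := aux_least_fixed_point G hG_cont hG_mono hG0 α hα β hβ hβM
    exact ⟨m, hm⟩
  · intro ε hε
    have hcontα : ContinuousAt G α := hG_cont.continuousAt (Ici_mem_nhds hα)
    rw [Metric.continuousAt_iff] at hcontα
    obtain ⟨δ, hδ, hδ_prop⟩ := hcontα ε hε
    refine ⟨min (1 / M) (δ / (2 * M)), by positivity, min_le_left _ _, ?_⟩
    intro β hβ hβ₁ m hm_least
    have hβ₀ : β ≤ 1 / M := hβ₁.trans (min_le_left _ _)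
    have hβδ : β ≤ δ / (2 * M) := hβ₁.trans (min_le_right _ _)
    have hβM : β * M ≤ 1 := by
      calc β * M ≤ (1 / M) * M := by nlinarith
        _ = 1 := by field_simp
    obtain ⟨m', hm', hcm', hm'M⟩ :=
      aux_least_fixed_point G hG_cont hG_mono hG0 α hα β hβ hβM
    have hmm : m = m' := hm_least.unique hm'
    subst hmm
    have hdist : dist (α + β * m) α < δ := by
      have h1 : 0 ≤ β * m := mul_nonneg hβ.le (hc.le.trans hcm')
      have h2 : β * m ≤ δ / 2 := by
        calc β * m ≤ (δ / (2 * M)) * M := by nlinarith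
          _ = δ / 2 := by field_simp
      rw [Real.dist_eq]
      rw [abs_of_nonneg (by linarith)]
      linarith
    have := hδ_prop hdist
    rw [Real.dist_eq] at this
    rwa [hm'.1.2] at this
end

section
/- Let G satisfy the general conditions on the nonlinearity, let α > 0, and suppose there exists ε > 0 such that y ↦ G(α + y)/y is strictly decreasing on (0, ε). Let β₀ > 0 be such that for every β ∈ (0, β₀] the set S_β = {y > 0 : G(α + βy) = y} is nonempty and has a minimum m(β). Then the nonzero fixed points other than the minimum diverge to +∞ as β → 0⁺: for every M > 0 there exists β₁ ∈ (0, β₀] such that for every β ∈ (0, β₁], every y ∈ S_β with y ≠ m(β) satisfies y > M. -/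
/-- Lemma 29, second part: for `G` satisfying the general conditions on the nonlinearity,
`α > 0`, and `y ↦ G (α + y) / y` strictly decreasing near zero, the nonzero fixed points of
`y ↦ G (α + β * y)` other than the minimum diverge to `+∞` as `β → 0⁺`. -/
theorem lemma_other_fixed_points_diverge (G : ℝ → ℝ)
    (hG_cont : ContinuousOn G (Set.Ici 0))
    (hG_mono : StrictMonoOn G (Set.Ici 0))
    (hG_nonneg : ∀ y ≥ (0:ℝ), 0 ≤ G y)
    (hG0 : G 0 = 0)
    (α : ℝ) (hα : 0 < α)
    (ε : ℝ) (hε : 0 < ε)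
    (hG_dec : ∀ y₁ y₂ : ℝ, 0 < y₁ → y₁ < y₂ → y₂ < ε →
      G (α + y₂) / y₂ < G (α + y₁) / y₁)
    (β₀ : ℝ) (hβ₀ : 0 < β₀)
    (hmin : ∀ β : ℝ, 0 < β → β ≤ β₀ →
      ∃ m : ℝ, IsLeast {y : ℝ | 0 < y ∧ G (α + β * y) = y} m) :
    ∀ M > (0:ℝ), ∃ β₁ : ℝ, 0 < β₁ ∧ β₁ ≤ β₀ ∧ ∀ β : ℝ, 0 < β → β ≤ β₁ →
      ∀ m y : ℝ, IsLeast {y : ℝ | 0 < y ∧ G (α + β * y) = y} m →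
        (0 < y ∧ G (α + β * y) = y) → y ≠ m → M < y := by
  intro M hM
  refine ⟨min β₀ (ε / (2 * M)), lt_min hβ₀ (by positivity), min_le_left _ _, ?_⟩
  intro β hβ hβ₁ m y hleast hy hne
  obtain ⟨⟨hm_pos, hm_fix⟩, hm_least⟩ := hleast
  have hmy : m < y := lt_of_le_of_ne (hm_least hy) (Ne.symm hne)
  obtain ⟨hy_pos, hy_fix⟩ := hy
  -- y ≥ ε / β
  have hkey : ε / β ≤ y := by
    by_contra h
    push_neg at h
    have hyε : β * y < ε := by
      have := (lt_div_iff₀ hβ).mp h; linarith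
    have hdec := hG_dec (β * m) (β * y) (by positivity)
      (by exact mul_lt_mul_of_pos_left hmy hβ) hyε
    rw [hm_fix, hy_fix] at hdec
    have h1 : y / (β * y) = 1 / β := by field_simp
    have h2 : m / (β * m) = 1 / β := by field_simp
    rw [h1, h2] at hdec
    exact lt_irrefl _ hdec
  have hβle : β ≤ ε / (2 * M) := le_trans hβ₁ (min_le_right _ _)
  have h2M : 2 * M ≤ ε / β := by
    rw [le_div_iff₀ hβ]
    calc 2 * M * β ≤ 2 * M * (ε / (2 * M)) := by
          exact mul_le_mul_of_nonneg_left hβle (by positivity)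
      _ = ε := by field_simp
  linarith
end

section
/- Let G satisfy the general conditions on the nonlinearity, suppose G(y)/y is unbounded on (0,∞), and let β₀ > 0 be such that for every β ∈ (0, β₀] the set {y > 0 : G(βy) = y} is nonempty with minimum m(β). Then the following are equivalent: (1) m(β) does not diverge to +∞ as β → 0⁺, i.e. there exists M > 0 such that for every ε > 0 there exists β ∈ (0, min(ε, β₀)] with m(β) ≤ M; (2) G(y)/y is unbounded near zero. -/
/-- Characterization part of the lemma used for nondivergent existence: with `G` satisfying the
general conditions on the nonlinearity, `G y / y` unbounded on `(0, ∞)`, and `m β` the minimum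
of the nonzero fixed points of `y ↦ G (β * y)` for `0 < β ≤ β₀`, the minimum `m β` does not
diverge to `+∞` as `β → 0⁺` if and only if `G y / y` is unbounded near zero. -/
theorem lemma_min_nondivergence_iff (G : ℝ → ℝ)
    (hG_cont : ContinuousOn G (Set.Ici 0))
    (hG_mono : StrictMonoOn G (Set.Ici 0))
    (hG_nonneg : ∀ y ≥ (0:ℝ), 0 ≤ G y)
    (hG0 : G 0 = 0)
    (hG_unb : ∀ M > (0:ℝ), ∃ y > (0:ℝ), G y > M * y)
    (β₀ : ℝ) (hβ₀ : 0 < β₀) (m : ℝ → ℝ)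
    (hm : ∀ β : ℝ, 0 < β → β ≤ β₀ →
      IsLeast {y : ℝ | 0 < y ∧ G (β * y) = y} (m β)) :
    (∃ M > (0:ℝ), ∀ ε > (0:ℝ), ∃ β : ℝ, 0 < β ∧ β ≤ min ε β₀ ∧ m β ≤ M) ↔
      (∀ δ > (0:ℝ), ∀ M > (0:ℝ), ∃ y : ℝ, 0 < y ∧ y < δ ∧ G y > M * y) := by
  constructor
  · rintro ⟨M, hM, hall⟩ δ hδ M' hM'
    obtain ⟨β, hβpos, hβle, hmle⟩ := hall (min (δ / (M + 1)) (1 / (2 * M')))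
      (lt_min (by positivity) (by positivity))
    obtain ⟨⟨hmpos, hmfix⟩, -⟩ := hm β hβpos (hβle.trans (min_le_right _ _))
    have hβε := hβle.trans (min_le_left _ _)
    have h1 : β * (M + 1) ≤ δ :=
      (le_div_iff₀ (by positivity)).mp (hβε.trans (min_le_left _ _))
    have h2 : β * (2 * M') ≤ 1 :=
      (le_div_iff₀ (by positivity)).mp (hβε.trans (min_le_right _ _))
    refine ⟨β * m β, by positivity, ?_, ?_⟩
    · nlinarith
    · rw [hmfix]
      nlinarith
  · intro H
    have hc : ContinuousWithinAt G (Set.Ici 0) 0 := hG_cont 0 Set.self_mem_Ici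
    have h1 : ∀ᶠ z in nhdsWithin 0 (Set.Ici 0), G z < 1 :=
      hc (Iio_mem_nhds (by rw [hG0]; norm_num))
    obtain ⟨η, hη, hηh⟩ := Metric.mem_nhdsWithin_iff.mp h1
    refine ⟨1, one_pos, fun ε hε => ?_⟩
    set β := min (min ε β₀) (η / 2) with hβdef
    have hβpos : 0 < β := lt_min (lt_min hε hβ₀) (by positivity)
    have hββ₀ : β ≤ β₀ := (min_le_left _ _).trans (min_le_right _ _)
    obtain ⟨z, hz0, hzβ, hzG⟩ := H β hβpos (1 / β) (by positivity)
    set y₁ := z / β with hy₁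
    have hy₁pos : 0 < y₁ := by positivity
    have hy₁lt : y₁ < 1 := (div_lt_one hβpos).mpr hzβ
    have hGβ : G β < 1 := by
      apply hηh
      refine ⟨?_, hβpos.le⟩
      rw [Metric.mem_ball, Real.dist_eq, sub_zero, abs_of_pos hβpos]
      calc β ≤ η / 2 := min_le_right _ _
        _ < η := by linarith
    have hcont : ContinuousOn (fun y => G (β * y) - y) (Set.Icc y₁ 1) := by
      apply ContinuousOn.sub _ continuousOn_id
      apply hG_cont.comp ((continuous_const.mul continuous_id).continuousOn)
      intro y hy
      exact mul_nonneg hβpos.le (le_trans hy₁pos.le hy.1)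
    have key : (0 : ℝ) ∈ (fun y => G (β * y) - y) '' Set.Icc y₁ 1 := by
      apply intermediate_value_Icc' hy₁lt.le hcont
      constructor
      · simp only [mul_one]
        linarith
      · have hzy : β * y₁ = z := by rw [hy₁]; field_simp
        have : G z > y₁ := by
          have : (1 / β) * z = y₁ := by rw [hy₁, one_div, inv_mul_eq_div]
          linarith [hzG]
        show (0:ℝ) ≤ G (β * y₁) - y₁
        rw [hzy]
        linarith
    obtain ⟨c, hcmem, hcfix⟩ := key
    have hcpos : 0 < c := lt_of_lt_of_le hy₁pos hcmem.1
    have hcfix' : G (β * c) = c := by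
      have := hcfix
      simp only at this
      linarith
    have hle := (hm β hβpos hββ₀).2 ⟨hcpos, hcfix'⟩
    exact ⟨β, hβpos, le_min ((min_le_left _ _).trans (min_le_left _ _)) hββ₀,
      hle.trans hcmem.2⟩
end

section
/- Let K satisfy the general conditions on the kernel and suppose K(t,s) ≤ K(t',s) for all 0 ≤ s ≤ t < t'. Let G satisfy the general conditions on the nonlinearity with G(y)/y unbounded on (0,∞). Fix c₁ ∈ (0,1], an integer n ≥ 0, reals 0 = t₀ < t₁ < ... < t_n, and strictly positive reals Z₀, ..., Z_{n−1} (no condition when n = 0). Then there exists H_n > 0 such that for every h_n ∈ (0, H_n] there exists Z_n > 0 satisfying Z_n = G( Σ_{l=0}^{n−1} Z_l ∫_{t_l}^{t_{l+1}} K(t_n + c₁h_n, s) ds + Z_n ∫_{t_n}^{t_n + c₁h_n} K(t_n + c₁h_n, s) ds ). (This is the inductive step establishing existence near zero of nontrivial collocation solutions in case 1, m = 1 with c₁ > 0.) -/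
/-- Proposition 1, sufficiency direction (inductive step), case 1 (`m = 1`, `c₁ > 0`):
with `K` satisfying the general conditions on the kernel and monotone in its first variable,
and `G` satisfying the general conditions on the nonlinearity with `G y / y` unbounded, given
a partial mesh `0 = t₀ < … < t_n` and strictly positive coefficients `Z₀, …, Z_{n-1}`, there
exists `H_n > 0` such that for every stepsize `0 < h_n ≤ H_n` the next collocation equation has
a strictly positive solution `Z_n`. -/
theorem prop1_sufficiency (K : ℝ → ℝ → ℝ)
    (hK_nonneg : ∀ t s : ℝ, 0 ≤ K t s)
    (hK_bdd : ∀ R > (0:ℝ), ∃ C : ℝ, ∀ t ∈ Set.Icc (-R) R, ∀ s ∈ Set.Icc (-R) R, K t s ≤ C)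
    (hK_supp : ∀ t s : ℝ, (s < 0 ∨ t < s) → K t s = 0)
    (hK_int : ∀ t > (0:ℝ), IntervalIntegrable (fun s => K t s) MeasureTheory.volume 0 t)
    (hK_inc : StrictMonoOn (fun t => ∫ s in (0:ℝ)..t, K t s) (Set.Ici 0))
    (hK_mono : ∀ t t' s : ℝ, 0 ≤ s → s ≤ t → t < t' → K t s ≤ K t' s)
    (G : ℝ → ℝ)
    (hG_cont : ContinuousOn G (Set.Ici 0))
    (hG_mono : StrictMonoOn G (Set.Ici 0))
    (hG_nonneg : ∀ y ≥ (0:ℝ), 0 ≤ G y)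
    (hG0 : G 0 = 0)
    (hG_unb : ∀ M > (0:ℝ), ∃ y > (0:ℝ), G y > M * y)
    (c₁ : ℝ) (hc₁ : 0 < c₁) (hc₁' : c₁ ≤ 1)
    (n : ℕ) (t : ℕ → ℝ) (ht0 : t 0 = 0) (ht_mono : ∀ l < n, t l < t (l + 1))
    (Z : ℕ → ℝ) (hZ_pos : ∀ l < n, 0 < Z l) :
    ∃ Hn > (0:ℝ), ∀ hn : ℝ, 0 < hn → hn ≤ Hn → ∃ Zn > (0:ℝ),
      Zn = G ((∑ l ∈ Finset.range n,
          Z l * ∫ s in (t l)..(t (l + 1)), K (t n + c₁ * hn) s)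
        + Zn * ∫ s in (t n)..(t n + c₁ * hn), K (t n + c₁ * hn) s) := by
  -- monotonicity of the mesh
  have ht_le : ∀ j : ℕ, j ≤ n → ∀ i : ℕ, i ≤ j → t i ≤ t j := by
    intro j
    induction j with
    | zero => intro _ i hi; simp [Nat.le_zero.mp hi]
    | succ k ih =>
      intro hk i hi
      rcases eq_or_lt_of_le hi with rfl | h
      · exact le_rfl
      · have hik : i ≤ k := Nat.lt_succ_iff.mp h
        have hkn : k < n := Nat.lt_of_succ_le hk
        exact (ih (le_of_lt hkn) i hik).trans (ht_mono k hkn).le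
  have ht_nn : ∀ l : ℕ, l ≤ n → 0 ≤ t l := by
    intro l hl; rw [← ht0]; exact ht_le l hl 0 (Nat.zero_le l)
  have htn : 0 ≤ t n := ht_nn n le_rfl
  obtain ⟨C, hC⟩ := hK_bdd (t n + 2) (by linarith)
  have hC0 : 0 ≤ C :=
    (hK_nonneg 0 0).trans (hC 0 ⟨by linarith, by linarith⟩ 0 ⟨by linarith, by linarith⟩)
  set Amax := ∑ l ∈ Finset.range n, Z l * (C * (t (l + 1) - t l)) with hAmax
  have hAmax_nn : 0 ≤ Amax := by
    apply Finset.sum_nonneg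
    intro l hl
    have hl' := Finset.mem_range.mp hl
    exact mul_nonneg (hZ_pos l hl').le
      (mul_nonneg hC0 (by linarith [ht_mono l hl']))
  set xs := G (Amax + 1) + 1 with hxs
  have hxs1 : 1 ≤ xs := by
    have := hG_nonneg (Amax + 1) (by linarith)
    linarith
  have hCxs : 0 < (C + 1) * xs := mul_pos (by linarith) (by linarith)
  refine ⟨min 1 (1 / ((C + 1) * xs)), lt_min one_pos (one_div_pos.mpr hCxs), ?_⟩
  intro hn hhn hhn'
  have hhn1 : hn ≤ 1 := hhn'.trans (min_le_left _ _)
  have hhn2 : hn ≤ 1 / ((C + 1) * xs) := hhn'.trans (min_le_right _ _)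
  have hch : 0 < c₁ * hn := mul_pos hc₁ hhn
  set T := t n + c₁ * hn with hT
  have hTpos : 0 < T := by rw [hT]; linarith
  have htnT : t n ≤ T := by rw [hT]; linarith
  have hTle : T ≤ t n + 2 := by
    rw [hT]
    have : c₁ * hn ≤ 1 * 1 := mul_le_mul hc₁' hhn1 hhn.le one_pos.le
    linarith
  have hint : IntervalIntegrable (fun s => K T s) MeasureTheory.volume 0 T := hK_int T hTpos
  have hsub : ∀ a b : ℝ, 0 ≤ a → b ≤ T → a ≤ b →
      IntervalIntegrable (fun s => K T s) MeasureTheory.volume a b := by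
    intro a b ha hb hab
    refine hint.mono_set ?_
    rw [Set.uIcc_of_le hab, Set.uIcc_of_le hTpos.le]
    exact Set.Icc_subset_Icc ha hb
  have hKTC : ∀ s : ℝ, 0 ≤ s → s ≤ T → K T s ≤ C := by
    intro s h1 h2
    exact hC T ⟨by linarith, hTle⟩ s ⟨by linarith, by linarith⟩
  have hintle : ∀ a b : ℝ, 0 ≤ a → b ≤ T → a ≤ b → (∫ s in a..b, K T s) ≤ C * (b - a) := by
    intro a b ha hb hab
    have h1 := intervalIntegral.integral_mono_on hab (hsub a b ha hb hab)
      (intervalIntegrable_const (c := C))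
      (fun s hs => hKTC s (le_trans ha hs.1) (le_trans hs.2 hb))
    simpa [intervalIntegral.integral_const, smul_eq_mul, mul_comm] using h1
  set B := ∫ s in (t n)..T, K T s with hB
  set A := ∑ l ∈ Finset.range n, Z l * ∫ s in (t l)..(t (l + 1)), K T s with hA
  have hBnn : 0 ≤ B :=
    intervalIntegral.integral_nonneg htnT (fun u _ => hK_nonneg T u)
  have hBle : B ≤ C * (c₁ * hn) := by
    have h := hintle (t n) T htn le_rfl htnT
    rw [show T - t n = c₁ * hn by rw [hT]; ring] at h
    exact h
  have hterm_nn : ∀ l ∈ Finset.range n,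
      0 ≤ Z l * ∫ s in (t l)..(t (l + 1)), K T s := by
    intro l hl
    have hl' := Finset.mem_range.mp hl
    exact mul_nonneg (hZ_pos l hl').le
      (intervalIntegral.integral_nonneg (ht_mono l hl').le (fun u _ => hK_nonneg T u))
  have hAnn : 0 ≤ A := Finset.sum_nonneg hterm_nn
  have hAle : A ≤ Amax := by
    refine Finset.sum_le_sum ?_
    intro l hl
    have hl' := Finset.mem_range.mp hl
    have h1 : 0 ≤ t l := ht_nn l hl'.le
    have h2 : t (l + 1) ≤ T := (ht_le n le_rfl (l + 1) hl').trans htnT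
    exact mul_le_mul_of_nonneg_left
      (hintle (t l) (t (l + 1)) h1 h2 (ht_mono l hl').le) (hZ_pos l hl').le
  clear_value Amax xs T B A
  have hBxs : xs * B ≤ 1 := by
    have h1 : B ≤ (C + 1) * hn := by
      nlinarith [hBle, mul_nonneg (mul_nonneg hC0 hhn.le) (sub_nonneg.mpr hc₁')]
    have hne1 : (C + 1) ≠ 0 := ne_of_gt (by linarith)
    have hne2 : xs ≠ 0 := ne_of_gt (by linarith)
    calc xs * B ≤ xs * ((C + 1) * hn) := by
          exact mul_le_mul_of_nonneg_left h1 (by linarith)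
      _ ≤ xs * ((C + 1) * (1 / ((C + 1) * xs))) := by
          refine mul_le_mul_of_nonneg_left ?_ (by linarith)
          exact mul_le_mul_of_nonneg_left hhn2 (by linarith)
      _ = 1 := by field_simp
  have hφxs : G (A + xs * B) - xs < 0 := by
    have h1 : A + xs * B ≤ Amax + 1 := by linarith
    have h2 : G (A + xs * B) ≤ G (Amax + 1) :=
      hG_mono.monotoneOn
        (Set.mem_Ici.mpr (add_nonneg hAnn (mul_nonneg (by linarith) hBnn)))
        (Set.mem_Ici.mpr (by linarith)) h1
    linarith [h2, hxs.le]
  have hφcont : ∀ a b : ℝ, 0 ≤ a →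
      ContinuousOn (fun x => G (A + x * B) - x) (Set.Icc a b) := by
    intro a b ha
    have hcont2 : Continuous (fun x : ℝ => A + x * B) :=
      continuous_const.add (continuous_id.mul continuous_const)
    have h1 : ContinuousOn (fun x : ℝ => G (A + x * B)) (Set.Icc a b) := by
      apply hG_cont.comp hcont2.continuousOn
      intro x hx
      exact Set.mem_Ici.mpr (add_nonneg hAnn (mul_nonneg (le_trans ha hx.1) hBnn))
    exact h1.sub continuousOn_id
  rcases Nat.eq_zero_or_pos n with hn0 | hnpos
  · -- n = 0 : use unboundedness of G(y)/y
    have hA0 : A = 0 := by rw [hA, hn0]; simp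
    have htn0 : t n = 0 := by rw [hn0, ht0]
    have hBpos : 0 < B := by
      have h : (∫ s in (0:ℝ)..(0:ℝ), K 0 s) < ∫ s in (0:ℝ)..T, K T s :=
        hK_inc Set.self_mem_Ici (Set.mem_Ici.mpr hTpos.le) hTpos
      rw [intervalIntegral.integral_same] at h
      rw [hB, htn0]
      exact h
    obtain ⟨y, hy, hGy⟩ := hG_unb (1 / B) (one_div_pos.mpr hBpos)
    set x0 := y / B with hx0
    have hx0pos : 0 < x0 := div_pos hy hBpos
    have hφx0 : 0 < G (A + x0 * B) - x0 := by
      have he : A + x0 * B = y := by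
        rw [hA0, hx0, zero_add, div_mul_cancel₀ _ hBpos.ne']
      rw [he]
      have he2 : (1 / B) * y = x0 := by rw [hx0, one_div, inv_mul_eq_div]
      linarith [hGy, he2.ge]
    rcases le_total x0 xs with hle | hle
    · obtain ⟨c, hcmem, hc⟩ := intermediate_value_Icc' hle (hφcont x0 xs hx0pos.le)
        ⟨hφxs.le, hφx0.le⟩
      refine ⟨c, lt_of_lt_of_le hx0pos hcmem.1, ?_⟩
      have hc' : G (A + c * B) - c = 0 := hc
      linarith [hc']
    · obtain ⟨c, hcmem, hc⟩ := intermediate_value_Icc hle (hφcont xs x0 (by linarith))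
        ⟨hφxs.le, hφx0.le⟩
      refine ⟨c, lt_of_lt_of_le (by linarith : (0:ℝ) < xs) hcmem.1, ?_⟩
      have hc' : G (A + c * B) - c = 0 := hc
      linarith [hc']
  · -- n ≥ 1 : the history term A is strictly positive
    have ht1pos : 0 < t 1 := by rw [← ht0]; exact ht_mono 0 hnpos
    have ht1T : t 1 < T := by
      have := ht_le n le_rfl 1 hnpos
      rw [hT]; linarith
    have hI1 : 0 < ∫ s in (t 0)..(t 1), K T s := by
      rw [ht0]
      have hlow : (∫ s in (0:ℝ)..(t 1), K (t 1) s) ≤ ∫ s in (0:ℝ)..(t 1), K T s := by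
        apply intervalIntegral.integral_mono_on ht1pos.le (hK_int (t 1) ht1pos)
          (hsub 0 (t 1) le_rfl ht1T.le ht1pos.le)
        intro s hs
        exact hK_mono (t 1) T s hs.1 hs.2 ht1T
      have hpos : 0 < ∫ s in (0:ℝ)..(t 1), K (t 1) s := by
        have h : (∫ s in (0:ℝ)..(0:ℝ), K 0 s) < ∫ s in (0:ℝ)..(t 1), K (t 1) s :=
          hK_inc Set.self_mem_Ici (Set.mem_Ici.mpr ht1pos.le) ht1pos
        rwa [intervalIntegral.integral_same] at h
      linarith
    have hApos : 0 < A := by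
      have h := Finset.single_le_sum hterm_nn (Finset.mem_range.mpr hnpos)
      have h2 : 0 < Z 0 * ∫ s in (t 0)..(t 1), K T s := mul_pos (hZ_pos 0 hnpos) hI1
      rw [hA]; linarith
    have hGA : 0 < G A := by
      have := hG_mono Set.self_mem_Ici (Set.mem_Ici.mpr hAnn) hApos
      rwa [hG0] at this
    have hφ0 : 0 < G (A + 0 * B) - 0 := by
      simp only [zero_mul, add_zero, sub_zero]
      exact hGA
    obtain ⟨c, hcmem, hc⟩ := intermediate_value_Icc' (show (0:ℝ) ≤ xs by linarith)
      (hφcont 0 xs le_rfl) ⟨hφxs.le, hφ0.le⟩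
    have hc' : G (A + c * B) - c = 0 := hc
    have hcB : 0 ≤ c * B := mul_nonneg hcmem.1 hBnn
    have hcpos : 0 < c := by
      have h1 : G A ≤ G (A + c * B) :=
        hG_mono.monotoneOn (Set.mem_Ici.mpr hAnn)
          (Set.mem_Ici.mpr (by linarith)) (by linarith)
      linarith
    exact ⟨c, hcpos, by linarith [hc']⟩
end

section
/- Let K satisfy the general conditions on the kernel, let G satisfy the general conditions on the nonlinearity, and fix c₁ ∈ (0,1]. Suppose that for every ε > 0 there exist h₀ ∈ (0, ε] and Z₀ > 0 satisfying the first collocation equation Z₀ = G( Z₀ ∫₀^{c₁h₀} K(c₁h₀, s) ds ). Then G(y)/y is unbounded on (0,∞). -/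
/-- Proposition 1, necessity direction, case 1 (`m = 1`, `c₁ > 0`): with `K` satisfying the
general conditions on the kernel and `G` satisfying the general conditions on the nonlinearity,
if for every `ε > 0` there is a first stepsize `0 < h₀ ≤ ε` for which the first collocation
equation has a strictly positive solution `Z₀`, then `G y / y` is unbounded on `(0, ∞)`. -/
theorem prop1_necessity (K : ℝ → ℝ → ℝ)
    (hK_nonneg : ∀ t s : ℝ, 0 ≤ K t s)
    (hK_bdd : ∀ R > (0:ℝ), ∃ C : ℝ, ∀ t ∈ Set.Icc (-R) R, ∀ s ∈ Set.Icc (-R) R, K t s ≤ C)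
    (hK_supp : ∀ t s : ℝ, (s < 0 ∨ t < s) → K t s = 0)
    (hK_int : ∀ t > (0:ℝ), IntervalIntegrable (fun s => K t s) MeasureTheory.volume 0 t)
    (hK_inc : StrictMonoOn (fun t => ∫ s in (0:ℝ)..t, K t s) (Set.Ici 0))
    (G : ℝ → ℝ)
    (hG_cont : ContinuousOn G (Set.Ici 0))
    (hG_mono : StrictMonoOn G (Set.Ici 0))
    (hG_nonneg : ∀ y ≥ (0:ℝ), 0 ≤ G y)
    (hG0 : G 0 = 0)
    (c₁ : ℝ) (hc₁ : 0 < c₁) (hc₁' : c₁ ≤ 1)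
    (hsol : ∀ ε > (0:ℝ), ∃ h₀ : ℝ, 0 < h₀ ∧ h₀ ≤ ε ∧ ∃ Z₀ > (0:ℝ),
      Z₀ = G (Z₀ * ∫ s in (0:ℝ)..(c₁ * h₀), K (c₁ * h₀) s)) :
    ∀ M > (0:ℝ), ∃ y > (0:ℝ), G y > M * y := by
  intro M hM
  obtain ⟨C, hC⟩ := hK_bdd 1 one_pos
  set C' : ℝ := max C 1 with hC'def
  have hC'pos : (0:ℝ) < C' := lt_of_lt_of_le one_pos (le_max_right _ _)
  set ε : ℝ := min 1 (1 / (2 * M * C')) with hεdef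
  have hεpos : 0 < ε := lt_min one_pos (by positivity)
  obtain ⟨h₀, hh₀, hh₀ε, Z₀, hZ₀, heq⟩ := hsol ε hεpos
  set t : ℝ := c₁ * h₀ with htdef
  have ht : 0 < t := mul_pos hc₁ hh₀
  have htε : t ≤ ε := by
    calc t ≤ 1 * h₀ := mul_le_mul_of_nonneg_right hc₁' hh₀.le
    _ = h₀ := one_mul _
    _ ≤ ε := hh₀ε
  have ht1 : t ≤ 1 := htε.trans (min_le_left _ _)
  set a : ℝ := ∫ s in (0:ℝ)..t, K t s with hadef
  have ha_pos : 0 < a := by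
    have := hK_inc (Set.self_mem_Ici) (Set.mem_Ici.mpr ht.le) ht
    simpa [hadef, intervalIntegral.integral_same] using this
  have ha_le : a ≤ C' * t := by
    have hmono : a ≤ ∫ _s in (0:ℝ)..t, C' := by
      apply intervalIntegral.integral_mono_on ht.le (hK_int t ht) intervalIntegrable_const
      intro s hs
      have hs1 : s ∈ Set.Icc (-1:ℝ) 1 :=
        ⟨by linarith [hs.1], hs.2.trans ht1⟩
      have ht1' : t ∈ Set.Icc (-1:ℝ) 1 := ⟨by linarith, ht1⟩
      exact (hC t ht1' s hs1).trans (le_max_left _ _)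
    simpa [mul_comm] using hmono
  have ha_lt : M * a < 1 := by
    have h1 : a ≤ C' * ε := ha_le.trans (mul_le_mul_of_nonneg_left htε hC'pos.le)
    have h2 : C' * ε ≤ C' * (1 / (2 * M * C')) :=
      mul_le_mul_of_nonneg_left (min_le_right _ _) hC'pos.le
    have h3 : C' * (1 / (2 * M * C')) = 1 / (2 * M) := by
      field_simp
    have : a ≤ 1 / (2 * M) := h1.trans (h2.trans_eq h3)
    have := mul_le_mul_of_nonneg_left this hM.le
    have h4 : M * (1 / (2 * M)) = 1 / 2 := by field_simp
    nlinarith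
  refine ⟨Z₀ * a, mul_pos hZ₀ ha_pos, ?_⟩
  have hGy : G (Z₀ * a) = Z₀ := heq.symm
  rw [hGy]
  nlinarith
end

section
/- Let k : [0,∞) → [0,∞) be locally bounded and locally integrable with x ↦ ∫₀ˣ k(s) ds strictly increasing, and let G satisfy the general conditions on the nonlinearity with G(y)/y unbounded near zero and bounded away from zero. Fix c₁ ∈ (0,1]. Then there exists H > 0 such that for every T > 0 and every mesh 0 = t₀ < t₁ < ... < t_N = T all of whose stepsizes h_n = t_{n+1} − t_n satisfy h_n ≤ H, there exists a nontrivial collocation solution: strictly positive reals Z₀, ..., Z_{N−1} satisfying, for every n = 0, ..., N−1, Z_n = G( Σ_{l=0}^{n−1} Z_l ∫_{t_l}^{t_{l+1}} k(t_n + c₁h_n − s) ds + Z_n ∫₀^{c₁h_n} k(u) du ). -/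
lemma exists_fp (G : ℝ → ℝ) (hG_cont : ContinuousOn G (Set.Ici 0))
    (hG_mono : StrictMonoOn G (Set.Ici 0)) (hG0 : G 0 = 0)
    (hG_unb0 : ∀ δ > (0:ℝ), ∀ M > (0:ℝ), ∃ y : ℝ, 0 < y ∧ y < δ ∧ G y > M * y)
    (M : ℝ) (hM : 0 < M) (hMy : ∀ y > (1:ℝ), G y ≤ M * y)
    (A κ : ℝ) (hA : 0 ≤ A) (hκ : 0 < κ) (hMκ : M * κ ≤ 1/2) :
    ∃ z : ℝ, 0 < z ∧ z = G (A + z * κ) := by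
  obtain ⟨z₁, hz₁0, hz₁, hz₁'⟩ :
      ∃ z₁, 0 ≤ z₁ ∧ z₁ < G (A + z₁ * κ) ∧ (0 < z₁ ∨ 0 < A) := by
    rcases eq_or_lt_of_le hA with hA0 | hA0
    · obtain ⟨y, hy0, hy1, hy⟩ := hG_unb0 1 one_pos (1/κ) (by positivity)
      refine ⟨y/κ, by positivity, ?_, Or.inl (by positivity)⟩
      have hAy : A + (y/κ) * κ = y := by rw [← hA0, div_mul_cancel₀ y hκ.ne', zero_add]
      rw [hAy]
      calc y/κ = (1/κ)*y := by ring
        _ < G y := hy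
    · refine ⟨0, le_rfl, ?_, Or.inr hA0⟩
      have := hG_mono Set.self_mem_Ici (Set.mem_Ici.2 hA) hA0
      simpa [hG0] using this
  have hMA : 0 ≤ M * A := mul_nonneg hM.le hA
  have hκ' : 0 < 1/κ := by positivity
  have h1 : (1/κ) * κ = 1 := by field_simp
  obtain ⟨z₂, hz₂def⟩ : ∃ z₂ : ℝ, z₂ = z₁ + 2*M*A + 1/κ + 1 := ⟨_, rfl⟩
  have hz₁₂ : z₁ ≤ z₂ := by linarith
  have hz₂pos : 0 < z₂ := by linarith
  have hz₂big1 : 1 < A + z₂ * κ := by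
    nlinarith [mul_nonneg hz₁0 hκ.le, mul_nonneg hMA hκ.le]
  have hz₂ : G (A + z₂*κ) < z₂ := by
    have hb := hMy _ hz₂big1
    nlinarith [mul_nonneg (by linarith : (0:ℝ) ≤ 1/2 - M*κ) hz₂pos.le]
  have hcont : ContinuousOn (fun z => G (A + z*κ) - z) (Set.Icc z₁ z₂) := by
    apply ContinuousOn.sub _ continuousOn_id
    apply hG_cont.comp ((continuous_const.add (continuous_id.mul continuous_const)).continuousOn)
    intro z hz
    show A + z * κ ∈ Set.Ici 0
    exact Set.mem_Ici.2 (by nlinarith [hz.1, mul_nonneg (hz₁0.trans hz.1) hκ.le])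
  have h0mem : (0:ℝ) ∈ Set.Icc (G (A + z₂*κ) - z₂) (G (A + z₁*κ) - z₁) :=
    ⟨by linarith, by linarith⟩
  obtain ⟨z, hzmem, hzeq⟩ := intermediate_value_Icc' hz₁₂ hcont h0mem
  have hzeq' : G (A + z * κ) - z = 0 := hzeq
  have hzfix : z = G (A + z * κ) := by linarith
  refine ⟨z, ?_, hzfix⟩
  rcases hz₁' with h | h
  · exact lt_of_lt_of_le h hzmem.1
  · rcases lt_or_ge 0 z with hz | hz
    · exact hz
    · exfalso
      have hz0 : z = 0 := le_antisymm hz (hz₁0.trans hzmem.1)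
      rw [hz0] at hzfix
      have := hG_mono Set.self_mem_Ici (Set.mem_Ici.2 hA) h
      simp [hG0] at this
      simp at hzfix
      linarith

/-- Proposition 2, existence for fine meshes, case 1 (`m = 1`, `c₁ > 0`), convolution kernel
`K(t,s) = k(t-s)`: with `k` locally bounded, locally integrable, with strictly increasing
primitive, and `G` satisfying the general conditions on the nonlinearity with `G y / y`
unbounded near zero but bounded away from zero, there exists `H > 0` such that every mesh with
all stepsizes at most `H` admits a nontrivial (strictly positive) collocation solution. -/
theorem prop2_fine_meshes (k : ℝ → ℝ)
    (hk_nonneg : ∀ x : ℝ, 0 ≤ x → 0 ≤ k x)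
    (hk_bdd : ∀ R > (0:ℝ), ∃ C : ℝ, ∀ x ∈ Set.Icc (0:ℝ) R, k x ≤ C)
    (hk_int : ∀ x > (0:ℝ), IntervalIntegrable k MeasureTheory.volume 0 x)
    (hk_inc : StrictMonoOn (fun x => ∫ s in (0:ℝ)..x, k s) (Set.Ici 0))
    (G : ℝ → ℝ)
    (hG_cont : ContinuousOn G (Set.Ici 0))
    (hG_mono : StrictMonoOn G (Set.Ici 0))
    (hG_nonneg : ∀ y ≥ (0:ℝ), 0 ≤ G y)
    (hG0 : G 0 = 0)
    (hG_unb0 : ∀ δ > (0:ℝ), ∀ M > (0:ℝ), ∃ y : ℝ, 0 < y ∧ y < δ ∧ G y > M * y)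
    (hG_bdd : ∀ t > (0:ℝ), ∃ M > (0:ℝ), ∀ y > t, G y ≤ M * y)
    (c₁ : ℝ) (hc₁ : 0 < c₁) (hc₁' : c₁ ≤ 1) :
    ∃ H > (0:ℝ), ∀ T > (0:ℝ), ∀ N : ℕ, ∀ t : ℕ → ℝ,
      t 0 = 0 → t N = T → (∀ n < N, t n < t (n + 1)) →
      (∀ n < N, t (n + 1) - t n ≤ H) →
      ∃ Z : ℕ → ℝ, (∀ n < N, 0 < Z n) ∧
        ∀ n < N, Z n = G ((∑ l ∈ Finset.range n,
            Z l * ∫ s in (t l)..(t (l + 1)), k (t n + c₁ * (t (n + 1) - t n) - s))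
          + Z n * ∫ u in (0:ℝ)..(c₁ * (t (n + 1) - t n)), k u) := by
  obtain ⟨M, hM, hMy⟩ := hG_bdd 1 one_pos
  obtain ⟨C, hC⟩ := hk_bdd 1 one_pos
  have hC0 : 0 ≤ C := le_trans (hk_nonneg 0 le_rfl) (hC 0 ⟨le_rfl, zero_le_one⟩)
  refine ⟨min 1 (1/(2*M*(C+1))), lt_min one_pos (by positivity), ?_⟩
  set H := min 1 (1/(2*M*(C+1))) with hHdef
  have hH : 0 < H := lt_min one_pos (by positivity)
  have hH1 : H ≤ 1 := min_le_left _ _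
  have hH2 : H ≤ 1/(2*M*(C+1)) := min_le_right _ _
  -- bound on the primitive at H
  have hFH : (∫ s in (0:ℝ)..H, k s) ≤ 1/(2*M) := by
    have hint : (∫ s in (0:ℝ)..H, k s) ≤ ∫ _ in (0:ℝ)..H, C := by
      apply intervalIntegral.integral_mono_on hH.le (hk_int H hH) intervalIntegrable_const
      intro x hx
      exact hC x ⟨hx.1, hx.2.trans hH1⟩
    rw [intervalIntegral.integral_const, smul_eq_mul, sub_zero] at hint
    have key : H * (2*M*(C+1)) ≤ 1 := (le_div_iff₀ (by positivity)).mp hH2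
    have hHM : 0 ≤ H * (2*M) := by positivity
    have hHC : H * C ≤ 1/(2*M) := by
      rw [le_div_iff₀ (by positivity)]
      nlinarith
    linarith
  -- monotonicity of the primitive
  have Fmono : ∀ a b : ℝ, 0 ≤ a → a ≤ b →
      (∫ s in (0:ℝ)..a, k s) ≤ ∫ s in (0:ℝ)..b, k s := by
    intro a b ha hab
    rcases eq_or_lt_of_le hab with rfl | h
    · exact le_rfl
    · exact (hk_inc (Set.mem_Ici.2 ha) (Set.mem_Ici.2 (ha.trans hab)) h).le
  have Fpos : ∀ a : ℝ, 0 < a → 0 < ∫ s in (0:ℝ)..a, k s := by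
    intro a ha
    have := hk_inc (Set.self_mem_Ici) (Set.mem_Ici.2 ha.le) ha
    simpa using this
  intro T hT N t ht0 htN hmono hstep
  -- monotonicity of the mesh
  have tmono : ∀ j, j ≤ N → ∀ i, i ≤ j → t i ≤ t j := by
    intro j
    induction j with
    | zero => intro _ i hi; interval_cases i; exact le_rfl
    | succ j ih =>
      intro hj i hi
      rcases Nat.lt_succ_iff_lt_or_eq.mp (Nat.lt_succ_of_le hi) with h | h
      · exact le_trans (ih (by omega) i (by omega)) (hmono j (by omega)).le
      · rw [h]
  -- main induction: partial solutions
  suffices hmain : ∀ n, n ≤ N → ∃ Z : ℕ → ℝ, (∀ m < n, 0 < Z m) ∧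
      ∀ m < n, Z m = G ((∑ l ∈ Finset.range m,
          Z l * ∫ s in (t l)..(t (l + 1)), k (t m + c₁ * (t (m + 1) - t m) - s))
        + Z m * ∫ u in (0:ℝ)..(c₁ * (t (m + 1) - t m)), k u) by
    obtain ⟨Z, h1, h2⟩ := hmain N le_rfl
    exact ⟨Z, h1, h2⟩
  intro n
  induction n with
  | zero => exact fun _ => ⟨fun _ => 1, fun m hm => absurd hm (Nat.not_lt_zero m), fun m hm => absurd hm (Nat.not_lt_zero m)⟩
  | succ n ih =>
    intro hn1
    obtain ⟨Z, hZpos, hZeq⟩ := ih (by omega)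
    have hnN : n < N := hn1
    have hh : 0 < t (n+1) - t n := sub_pos.2 (hmono n hnN)
    have hch : 0 < c₁ * (t (n+1) - t n) := by positivity
    have hchH : c₁ * (t (n+1) - t n) ≤ H := by
      have := hstep n hnN
      nlinarith
    have hκpos : 0 < ∫ u in (0:ℝ)..(c₁ * (t (n+1) - t n)), k u := Fpos _ hch
    have hMκ : M * (∫ u in (0:ℝ)..(c₁ * (t (n+1) - t n)), k u) ≤ 1/2 := by
      have h1 := Fmono _ _ hch.le hchH
      have h2 : M * (∫ u in (0:ℝ)..(c₁ * (t (n+1) - t n)), k u) ≤ M * (1/(2*M)) :=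
        mul_le_mul_of_nonneg_left (h1.trans hFH) hM.le
      have h3 : M * (1/(2*M)) = 1/2 := by field_simp; try ring
      linarith
    have hA : 0 ≤ ∑ l ∈ Finset.range n,
        Z l * ∫ s in (t l)..(t (l + 1)), k (t n + c₁ * (t (n + 1) - t n) - s) := by
      apply Finset.sum_nonneg
      intro l hl
      have hln : l < n := Finset.mem_range.mp hl
      apply mul_nonneg (hZpos l hln).le
      apply intervalIntegral.integral_nonneg (hmono l (by omega)).le
      intro s hs
      apply hk_nonneg
      have h1 : s ≤ t (l+1) := hs.2
      have h2 : t (l+1) ≤ t n := tmono n (by omega) (l+1) (by omega)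
      nlinarith
    obtain ⟨z, hz, hzeq⟩ := exists_fp G hG_cont hG_mono hG0 hG_unb0 M hM hMy _ _ hA hκpos hMκ
    refine ⟨Function.update Z n z, ?_, ?_⟩
    · intro m hm
      rcases Nat.lt_succ_iff_lt_or_eq.mp hm with h | h
      · rw [Function.update_of_ne (by omega)]; exact hZpos m h
      · rw [h, Function.update_self]; exact hz
    · intro m hm
      rcases Nat.lt_succ_iff_lt_or_eq.mp hm with h | h
      · have hsum : ∑ l ∈ Finset.range m,
            (Function.update Z n z) l * ∫ s in (t l)..(t (l + 1)),
              k (t m + c₁ * (t (m + 1) - t m) - s)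
            = ∑ l ∈ Finset.range m,
            Z l * ∫ s in (t l)..(t (l + 1)), k (t m + c₁ * (t (m + 1) - t m) - s) := by
          apply Finset.sum_congr rfl
          intro l hl
          rw [Function.update_of_ne (by have := Finset.mem_range.mp hl; omega)]
        rw [hsum, Function.update_of_ne (by omega)]
        exact hZeq m h
      · subst h
        have hsum : ∑ l ∈ Finset.range m,
            (Function.update Z m z) l * ∫ s in (t l)..(t (l + 1)),
              k (t m + c₁ * (t (m + 1) - t m) - s)
            = ∑ l ∈ Finset.range m,
            Z l * ∫ s in (t l)..(t (l + 1)), k (t m + c₁ * (t (m + 1) - t m) - s) := by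
          apply Finset.sum_congr rfl
          intro l hl
          rw [Function.update_of_ne (by have := Finset.mem_range.mp hl; omega)]
        rw [hsum, Function.update_self]
        exact hzeq
end

section
/- Let K satisfy the general conditions on the kernel, and let G satisfy the general conditions on the nonlinearity with G(y)/y unbounded near zero and such that there exists a sequence (yₙ) of positive reals with yₙ → +∞ and G(yₙ)/yₙ → 0. Fix c₁ ∈ (0,1]. Then there is unconditional existence: for every T > 0 and every mesh 0 = t₀ < t₁ < ... < t_N = T with stepsizes h_n = t_{n+1} − t_n, there exist strictly positive reals Z₀, ..., Z_{N−1} satisfying, for every n = 0, ..., N−1, Z_n = G( Σ_{l=0}^{n−1} Z_l ∫_{t_l}^{t_{l+1}} K(t_n + c₁h_n, s) ds + Z_n ∫_{t_n}^{t_n + c₁h_n} K(t_n + c₁h_n, s) ds ), i.e. a nontrivial collocation solution exists in any interval and for any mesh. -/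
open MeasureTheory Filter Set

lemma key_fp
    (G : ℝ → ℝ)
    (hG_cont : ContinuousOn G (Set.Ici 0))
    (hG_mono : StrictMonoOn G (Set.Ici 0))
    (hG0 : G 0 = 0)
    (hG_unb0 : ∀ δ > (0:ℝ), ∀ M > (0:ℝ), ∃ y : ℝ, 0 < y ∧ y < δ ∧ G y > M * y)
    (yseq : ℕ → ℝ)
    (hseq_pos : ∀ n, 0 < yseq n)
    (hseq_div : Filter.Tendsto yseq Filter.atTop Filter.atTop)
    (hseq_ratio : Filter.Tendsto (fun n => G (yseq n) / yseq n) Filter.atTop (nhds 0))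
    (A B : ℝ) (hA : 0 ≤ A) (hB : 0 ≤ B) (hAB : 0 < A ∨ 0 < B) :
    ∃ z : ℝ, 0 < z ∧ z = G (A + z * B) := by
  rcases eq_or_lt_of_le hB with hB0 | hBpos
  · -- B = 0
    have hApos : 0 < A := by
      rcases hAB with h | h
      · exact h
      · exact absurd h (by rw [← hB0]; exact lt_irrefl 0)
    refine ⟨G A, ?_, ?_⟩
    · have := hG_mono (self_mem_Ici) (le_of_lt hApos : (0:ℝ) ≤ A) hApos
      rwa [hG0] at this
    · rw [← hB0, mul_zero, add_zero]
  · -- B > 0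
    obtain ⟨y₀, hy₀pos, hy₀lt, hy₀⟩ := hG_unb0 1 one_pos (1/B) (by positivity)
    set z₀ := y₀ / B with hz₀def
    have hz₀pos : 0 < z₀ := div_pos hy₀pos hBpos
    have hz₀B : z₀ * B = y₀ := div_mul_cancel₀ _ hBpos.ne'
    have hlow : z₀ < G (A + z₀ * B) := by
      have hmem2 : A + z₀ * B ∈ Set.Ici (0:ℝ) := by
        rw [Set.mem_Ici]; nlinarith
      have h2 : G y₀ ≤ G (A + z₀ * B) :=
        hG_mono.monotoneOn (Set.mem_Ici.mpr hy₀pos.le) hmem2 (by linarith [hz₀B])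
      have h3 : (1/B) * y₀ = z₀ := by
        rw [hz₀def]; field_simp
      linarith
    have hev1 : ∀ᶠ n in atTop, max (2*A) (2*B*z₀) ≤ yseq n :=
      hseq_div.eventually_ge_atTop _
    have hev2 : ∀ᶠ n in atTop, G (yseq n) / yseq n < 1/(2*B) :=
      hseq_ratio.eventually_lt_const (by positivity)
    obtain ⟨n, h1, h2⟩ := (hev1.and hev2).exists
    set y := yseq n with hy
    have hypos : 0 < y := hseq_pos n
    have hyA : 2*A ≤ y := le_trans (le_max_left _ _) h1
    have hyz : 2*B*z₀ ≤ y := le_trans (le_max_right _ _) h1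
    set z₁ := (y - A)/B with hz₁def
    have hz₀z₁ : z₀ ≤ z₁ := by
      rw [hz₁def, le_div_iff₀ hBpos]; nlinarith
    have heq : A + z₁ * B = y := by
      rw [hz₁def, div_mul_cancel₀ _ hBpos.ne']; ring
    have hGy : G y < z₁ := by
      have ha : G y < (1/(2*B)) * y := by
        have := (div_lt_iff₀ hypos).mp h2
        linarith
      have hb : (1/(2*B)) * y ≤ z₁ := by
        rw [hz₁def, le_div_iff₀ hBpos]
        have h6 : (1/(2*B))*(2*B)*y = y := by
          rw [one_div_mul_cancel (by positivity : (2*B) ≠ 0), one_mul]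
        linarith
      linarith
    set g := fun z : ℝ => G (A + z*B) - z with hg
    have hcont : ContinuousOn g (Set.Icc z₀ z₁) := by
      apply ContinuousOn.sub _ continuousOn_id
      apply hG_cont.comp ((continuous_const.add (continuous_id.mul continuous_const)).continuousOn)
      intro z hz
      simp only [Pi.add_apply, Pi.mul_apply, id_eq, Set.mem_Ici]
      have hz1 : 0 ≤ z := le_trans hz₀pos.le hz.1
      nlinarith
    have hmem : (0:ℝ) ∈ Set.Icc (g z₁) (g z₀) := by
      constructor
      · show g z₁ ≤ 0
        simp only [hg, heq]
        linarith
      · show (0:ℝ) ≤ g z₀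
        simp only [hg]
        linarith
    obtain ⟨z, hzmem, hz⟩ := intermediate_value_Icc' hz₀z₁ hcont hmem
    refine ⟨z, lt_of_lt_of_le hz₀pos hzmem.1, ?_⟩
    have : G (A + z*B) - z = 0 := hz
    linarith

/-- Proposition 3, unconditional existence, case 1 (`m = 1`, `c₁ > 0`): with `K` satisfying the
general conditions on the kernel and `G` satisfying the general conditions on the nonlinearity
with `G y / y` unbounded near zero and admitting a sequence of positive reals `yₙ → +∞` with
`G yₙ / yₙ → 0`, a nontrivial (strictly positive) collocation solution exists in any interval
and for any mesh. -/
theorem prop3_unconditional (K : ℝ → ℝ → ℝ)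
    (hK_nonneg : ∀ t s : ℝ, 0 ≤ K t s)
    (hK_bdd : ∀ R > (0:ℝ), ∃ C : ℝ, ∀ t ∈ Set.Icc (-R) R, ∀ s ∈ Set.Icc (-R) R, K t s ≤ C)
    (hK_supp : ∀ t s : ℝ, (s < 0 ∨ t < s) → K t s = 0)
    (hK_int : ∀ t > (0:ℝ), IntervalIntegrable (fun s => K t s) MeasureTheory.volume 0 t)
    (hK_inc : StrictMonoOn (fun t => ∫ s in (0:ℝ)..t, K t s) (Set.Ici 0))
    (G : ℝ → ℝ)
    (hG_cont : ContinuousOn G (Set.Ici 0))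
    (hG_mono : StrictMonoOn G (Set.Ici 0))
    (hG_nonneg : ∀ y ≥ (0:ℝ), 0 ≤ G y)
    (hG0 : G 0 = 0)
    (hG_unb0 : ∀ δ > (0:ℝ), ∀ M > (0:ℝ), ∃ y : ℝ, 0 < y ∧ y < δ ∧ G y > M * y)
    (yseq : ℕ → ℝ)
    (hseq_pos : ∀ n, 0 < yseq n)
    (hseq_div : Filter.Tendsto yseq Filter.atTop Filter.atTop)
    (hseq_ratio : Filter.Tendsto (fun n => G (yseq n) / yseq n) Filter.atTop (nhds 0))
    (c₁ : ℝ) (hc₁ : 0 < c₁) (hc₁' : c₁ ≤ 1) :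
    ∀ T > (0:ℝ), ∀ N : ℕ, ∀ t : ℕ → ℝ,
      t 0 = 0 → t N = T → (∀ n < N, t n < t (n + 1)) →
      ∃ Z : ℕ → ℝ, (∀ n < N, 0 < Z n) ∧
        ∀ n < N, Z n = G ((∑ l ∈ Finset.range n,
            Z l * ∫ s in (t l)..(t (l + 1)), K (t n + c₁ * (t (n + 1) - t n)) s)
          + Z n * ∫ s in (t n)..(t n + c₁ * (t (n + 1) - t n)),
              K (t n + c₁ * (t (n + 1) - t n)) s) := by
  intro T hT N t ht0 htN htmono
  -- monotonicity of the mesh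
  have tmono : ∀ i j : ℕ, i ≤ j → j ≤ N → t i ≤ t j := by
    intro i j hij hjN
    induction j with
    | zero => simp only [Nat.le_zero] at hij; simp [hij]
    | succ j ih =>
      rcases Nat.lt_succ_iff_lt_or_eq.mp (Nat.lt_succ_of_le hij) with h | h
      · exact le_trans (ih (Nat.lt_succ_iff.mp h) (le_trans (Nat.le_succ j) hjN))
          (le_of_lt (htmono j (Nat.lt_of_succ_le hjN)))
      · rw [h]
  have tnonneg : ∀ k, k ≤ N → 0 ≤ t k := by
    intro k hk
    have := tmono 0 k (Nat.zero_le _) hk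
    rwa [ht0] at this
  -- the main induction
  have main : ∀ n, n ≤ N → ∃ Z : ℕ → ℝ, (∀ k < n, 0 < Z k) ∧
      ∀ k < n, Z k = G ((∑ l ∈ Finset.range k,
            Z l * ∫ s in (t l)..(t (l + 1)), K (t k + c₁ * (t (k + 1) - t k)) s)
          + Z k * ∫ s in (t k)..(t k + c₁ * (t (k + 1) - t k)),
              K (t k + c₁ * (t (k + 1) - t k)) s) := by
    intro n
    induction n with
    | zero =>
      intro _
      exact ⟨fun _ => 1, fun k hk => absurd hk (Nat.not_lt_zero k),
        fun k hk => absurd hk (Nat.not_lt_zero k)⟩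
    | succ n ih =>
      intro hn1
      have hnN : n < N := Nat.lt_of_succ_le hn1
      obtain ⟨Z, hZpos, hZeq⟩ := ih (le_of_lt hnN)
      have htn_lt : t n < t (n+1) := htmono n hnN
      set τ := t n + c₁ * (t (n+1) - t n) with hτdef
      have hτgt : t n < τ := by nlinarith
      have htn0 : 0 ≤ t n := tnonneg n (le_of_lt hnN)
      have hτpos : 0 < τ := lt_of_le_of_lt htn0 hτgt
      set A := ∑ l ∈ Finset.range n, Z l * ∫ s in (t l)..(t (l+1)), K τ s with hAdef
      set B := ∫ s in (t n)..τ, K τ s with hBdef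
      have hInonneg : ∀ l, l < n → 0 ≤ ∫ s in (t l)..(t (l+1)), K τ s := by
        intro l hl
        exact intervalIntegral.integral_nonneg
          (le_of_lt (htmono l (lt_trans hl hnN))) (fun u _ => hK_nonneg _ _)
      have hA : 0 ≤ A :=
        Finset.sum_nonneg (fun l hl =>
          mul_nonneg (hZpos l (Finset.mem_range.mp hl)).le
            (hInonneg l (Finset.mem_range.mp hl)))
      have hB : 0 ≤ B :=
        intervalIntegral.integral_nonneg hτgt.le (fun u _ => hK_nonneg _ _)
      -- integrability on subintervals of [0, τ]
      have hsub : ∀ a b : ℝ, 0 ≤ a → a ≤ b → b ≤ τ →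
          IntervalIntegrable (fun s => K τ s) MeasureTheory.volume a b := by
        intro a b ha hab hbτ
        refine (hK_int τ hτpos).mono_set ?_
        rw [Set.uIcc_of_le hab, Set.uIcc_of_le hτpos.le]
        exact Set.Icc_subset_Icc ha hbτ
      have htotal : 0 < ∫ s in (0:ℝ)..τ, K τ s := by
        have h := hK_inc (Set.self_mem_Ici) (Set.mem_Ici.mpr hτpos.le) hτpos
        simpa using h
      have hsplit : (∫ s in (0:ℝ)..(t n), K τ s) + ∫ s in (t n)..τ, K τ s
          = ∫ s in (0:ℝ)..τ, K τ s :=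
        intervalIntegral.integral_add_adjacent_intervals
          (hsub 0 (t n) le_rfl htn0 hτgt.le)
          (hsub (t n) τ htn0 hτgt.le le_rfl)
      have hsum : (∑ l ∈ Finset.range n, ∫ s in (t l)..(t (l+1)), K τ s)
          = ∫ s in (t 0)..(t n), K τ s := by
        apply intervalIntegral.sum_integral_adjacent_intervals
        intro l hl
        exact hsub (t l) (t (l+1)) (tnonneg l (le_of_lt (lt_trans hl hnN)))
          (le_of_lt (htmono l (lt_trans hl hnN)))
          (le_trans (tmono (l+1) n (Nat.succ_le_of_lt hl) hnN.le) hτgt.le)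
      have hABpos : 0 < A ∨ 0 < B := by
        by_contra hcon
        push_neg at hcon
        have hA0 : A = 0 := le_antisymm hcon.1 hA
        have hB0 : B = 0 := le_antisymm hcon.2 hB
        have hzero : ∀ l ∈ Finset.range n,
            Z l * ∫ s in (t l)..(t (l+1)), K τ s = 0 :=
          (Finset.sum_eq_zero_iff_of_nonneg (fun l hl =>
            mul_nonneg (hZpos l (Finset.mem_range.mp hl)).le
              (hInonneg l (Finset.mem_range.mp hl)))).mp hA0
        have hIzero : ∀ l ∈ Finset.range n, (∫ s in (t l)..(t (l+1)), K τ s) = 0 := by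
          intro l hl
          have := hzero l hl
          exact (mul_eq_zero.mp this).resolve_left (hZpos l (Finset.mem_range.mp hl)).ne'
        have h1 : (∫ s in (t 0)..(t n), K τ s) = 0 := by
          rw [← hsum]
          exact Finset.sum_eq_zero hIzero
        rw [ht0] at h1
        rw [h1, zero_add] at hsplit
        have hlt : (0:ℝ) < B := by rw [hBdef, hsplit]; exact htotal
        rw [hB0] at hlt
        exact lt_irrefl 0 hlt
      obtain ⟨z, hzpos, hzeq⟩ := key_fp G hG_cont hG_mono hG0 hG_unb0 yseq
        hseq_pos hseq_div hseq_ratio A B hA hB hABpos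
      refine ⟨Function.update Z n z, ?_, ?_⟩
      · intro k hk
        rcases Nat.lt_succ_iff_lt_or_eq.mp hk with hk' | hk'
        · rw [Function.update_of_ne (Nat.ne_of_lt hk')]
          exact hZpos k hk'
        · subst hk'
          rw [Function.update_self]
          exact hzpos
      · intro k hk
        rcases Nat.lt_succ_iff_lt_or_eq.mp hk with hk' | hk'
        · have hupdk : Function.update Z n z k = Z k :=
            Function.update_of_ne (Nat.ne_of_lt hk') _ _
          have hsumeq : (∑ l ∈ Finset.range k, Function.update Z n z l *
              ∫ s in (t l)..(t (l + 1)), K (t k + c₁ * (t (k + 1) - t k)) s)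
            = ∑ l ∈ Finset.range k, Z l *
              ∫ s in (t l)..(t (l + 1)), K (t k + c₁ * (t (k + 1) - t k)) s := by
            apply Finset.sum_congr rfl
            intro l hl
            rw [Function.update_of_ne (Nat.ne_of_lt (lt_trans (Finset.mem_range.mp hl) hk'))]
          rw [hupdk, hsumeq]
          exact hZeq k hk'
        · replace hk' : n = k := hk'.symm
          subst hk'
          have hupdn : Function.update Z n z n = z := Function.update_self _ _ _
          have hsumeq : (∑ l ∈ Finset.range n, Function.update Z n z l *
              ∫ s in (t l)..(t (l + 1)), K (t n + c₁ * (t (n + 1) - t n)) s)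
            = ∑ l ∈ Finset.range n, Z l *
              ∫ s in (t l)..(t (l + 1)), K (t n + c₁ * (t (n + 1) - t n)) s := by
            apply Finset.sum_congr rfl
            intro l hl
            rw [Function.update_of_ne (Nat.ne_of_lt (Finset.mem_range.mp hl))]
          rw [hupdn, hsumeq, ← hτdef, ← hAdef, ← hBdef]
          exact hzeq
  obtain ⟨Z, h1, h2⟩ := main N le_rfl
  exact ⟨Z, h1, h2⟩
end
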